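/- arXiv:1709.07063 — 9 statements merged into one kernel-verified Lean document; each statement's English description precedes it below -/
import Mathlib

section
/- Let L be a lattice equipped with a binary multiplication · and two binary operations \ and /. Then the residuation laws (∀ x y z : L, x·y ≤ z ↔ y ≤ x \ z) and (∀ x y z : L, x·y ≤ z ↔ x ≤ z / y) hold if and only if the following four inequalities hold for all x, y, z : L: x ≤ (x·y ⊔ z)/y; ((x/y) ⊓ z)·y ≤ x; x ≤ y \ (y·x ⊔ z); x·((x \ y) ⊓ z) ≤ y. (This shows that GBI-algebras form a finitely based equational class.) -/
/-- A lattice with a multiplication and two division operations satisfies both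
residuation laws iff the four displayed inequalities hold. -/
theorem gbi_residuation_iff_ineqs {L : Type*} [Lattice L]
    (mul ldiv rdiv : L → L → L) :
    ((∀ x y z : L, mul x y ≤ z ↔ y ≤ ldiv x z) ∧
      (∀ x y z : L, mul x y ≤ z ↔ x ≤ rdiv z y)) ↔
    ((∀ x y z : L, x ≤ rdiv (mul x y ⊔ z) y) ∧
      (∀ x y z : L, mul (rdiv x y ⊓ z) y ≤ x) ∧
      (∀ x y z : L, x ≤ ldiv y (mul y x ⊔ z)) ∧
      (∀ x y z : L, mul x (ldiv x y ⊓ z) ≤ y)) := by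
  constructor
  · rintro ⟨hl, hr⟩
    refine ⟨fun x y z => ?_, fun x y z => ?_, fun x y z => ?_, fun x y z => ?_⟩
    · exact (hr x y _).mp le_sup_left
    · exact (hr _ y x).mpr inf_le_left
    · exact (hl y x _).mp le_sup_left
    · exact (hl x _ y).mpr inf_le_left
  · rintro ⟨h1, h2, h3, h4⟩
    constructor
    · intro x y z
      constructor
      · intro h
        have := h3 y x z
        rwa [sup_eq_right.mpr h] at this
      · intro h
        have := h4 x z y
        rwa [inf_eq_right.mpr h] at this
    · intro x y z
      constructor
      · intro h
        have := h1 x y z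
        rwa [sup_eq_right.mpr h] at this
      · intro h
        have := h2 z y x
        rwa [inf_eq_right.mpr h] at this
end

section
/- Every join-perfect complete Heyting algebra is meet-perfect (hence a perfect lattice): if A is a frame (complete Heyting algebra) such that every element a of A is the supremum of the set of completely join-irreducible elements below a, then every element a of A is the infimum of the set of completely meet-irreducible elements above a. -/
/-- An element of a complete lattice is completely join-irreducible if the
supremum of the elements strictly below it is strictly below it. -/
def CompletelyJoinIrreducible {A : Type*} [CompleteLattice A] (a : A) : Prop :=
  sSup {x | x < a} < a

/-- An element of a complete lattice is completely meet-irreducible if the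
infimum of the elements strictly above it is strictly above it. -/
def CompletelyMeetIrreducible {A : Type*} [CompleteLattice A] (a : A) : Prop :=
  a < sInf {x | a < x}

/-- Every join-perfect complete Heyting algebra (frame) is meet-perfect. -/
theorem joinPerfect_frame_meetPerfect {A : Type*} [Order.Frame A]
    (h : ∀ a : A, a = sSup {x | CompletelyJoinIrreducible x ∧ x ≤ a}) :
    ∀ a : A, a = sInf {x | CompletelyMeetIrreducible x ∧ a ≤ x} := by
  intro a
  refine le_antisymm (le_sInf fun x hx => hx.2) ?_
  set S := {x | CompletelyMeetIrreducible x ∧ a ≤ x} with hS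
  by_contra hba
  set b := sInf S with hbdef
  -- find a completely join-irreducible c ≤ b with ¬ c ≤ a
  obtain ⟨c, ⟨hcji, hcb⟩, hca⟩ :
      ∃ c, (CompletelyJoinIrreducible c ∧ c ≤ b) ∧ ¬ c ≤ a := by
    by_contra hall
    push_neg at hall
    exact hba ((h b).le.trans (sSup_le fun x hx => hall x hx))
  set d := sSup {x | x < c} with hd
  have hdc : d < c := hcji
  set m := c ⇨ d with hm
  have ham : a ≤ m := by
    rw [hm, le_himp_iff]
    have hlt : a ⊓ c < c :=
      lt_of_le_of_ne inf_le_right (fun e => hca (e ▸ inf_le_left))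
    exact le_sSup hlt
  have hcm : ¬ c ≤ m := by
    intro hcm'
    have : c ≤ d := by
      have := le_himp_iff.mp hcm'
      simpa using this
    exact absurd this (not_le_of_gt hdc)
  have hmi : CompletelyMeetIrreducible m := by
    have hcx : ∀ x, m < x → c ≤ x := by
      intro x hx
      by_contra hcx'
      have hlt : x ⊓ c < c :=
        lt_of_le_of_ne inf_le_right (fun e => hcx' (e ▸ inf_le_left))
      have : x ≤ m := le_himp_iff.mpr (le_sSup hlt)
      exact absurd this (not_le_of_gt hx)
    have h1 : m ⊔ c ≤ sInf {x | m < x} :=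
      le_sInf fun x hx => sup_le (le_of_lt hx) (hcx x hx)
    exact lt_of_lt_of_le (left_lt_sup.mpr hcm) h1
  have hbm : b ≤ m := sInf_le ⟨hmi, ham⟩
  exact hcm (hcb.trans hbm)
end

section
/- Let W, W' be types and N : W → W' → Prop. For X ⊆ W define γ(X) = {z ∈ W | ∀ y : W', (∀ x ∈ X, N x y) → N z y}. Let ∘ : W → W → Set W be a ternary relation, lifted to sets by X ∘ Y = ⋃ over x ∈ X, y ∈ Y of x ∘ y, and suppose there exist operations ⧹ : W → W' → Set W' and ⫽ : W' → W → Set W' satisfying the nuclear condition: for all x y : W and z : W', (∀ w ∈ x ∘ y, N w z) ↔ (∀ u ∈ z ⫽ y, N x u) and (∀ w ∈ x ∘ y, N w z) ↔ (∀ u ∈ x ⧹ z, N y u). Then γ is a closure operator on the powerset of W (X ⊆ γ(X), X ⊆ Y implies γ(X) ⊆ γ(Y), and γ(γ(X)) = γ(X)), and moreover γ is a nucleus: γ(X) ∘ γ(Y) ⊆ γ(X ∘ Y) for all X, Y ⊆ W. -/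
/-- The Galois closure operator determined by a relation `N : W → W' → Prop`. -/
def galClose {W W' : Type*} (N : W → W' → Prop) (X : Set W) : Set W :=
  {z | ∀ y : W', (∀ x ∈ X, N x y) → N z y}

/-- Lifting of a ternary relation on `W` to an operation on subsets of `W`. -/
def liftRel {W : Type*} (comp : W → W → Set W) (X Y : Set W) : Set W :=
  ⋃ x ∈ X, ⋃ y ∈ Y, comp x y

/-- If the nuclear condition holds then the Galois closure `γ` is a closure
operator on the powerset of `W`, and moreover a nucleus:
`γ(X) ∘ γ(Y) ⊆ γ(X ∘ Y)`. -/
theorem galClose_isNucleus {W W' : Type*} (N : W → W' → Prop)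
    (comp : W → W → Set W) (ldiv : W → W' → Set W') (rdiv : W' → W → Set W')
    (hnuc : ∀ (x y : W) (z : W'),
      ((∀ w ∈ comp x y, N w z) ↔ ∀ u ∈ rdiv z y, N x u) ∧
      ((∀ w ∈ comp x y, N w z) ↔ ∀ u ∈ ldiv x z, N y u)) :
    (∀ X : Set W, X ⊆ galClose N X) ∧
    (∀ X Y : Set W, X ⊆ Y → galClose N X ⊆ galClose N Y) ∧
    (∀ X : Set W, galClose N (galClose N X) = galClose N X) ∧
    (∀ X Y : Set W,
      liftRel comp (galClose N X) (galClose N Y) ⊆ galClose N (liftRel comp X Y)) := by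
  refine ⟨fun X x hx y hy => hy x hx,
    fun X Y hXY z hz y hy => hz y (fun x hx => hy x (hXY hx)),
    fun X => Set.Subset.antisymm
      (fun z hz y hy => hz y (fun x hx => hx y hy))
      (fun x hx y hy => hy x hx),
    ?_⟩
  intro X Y w hw
  simp only [liftRel, Set.mem_iUnion] at hw
  obtain ⟨a, ha, b, hb, hab⟩ := hw
  intro z hz
  -- hz : every element of X ∘ Y satisfies N · z
  have hz' : ∀ x ∈ X, ∀ y ∈ Y, ∀ w ∈ comp x y, N w z := by
    intro x hx y hy w hw
    exact hz w (by simp only [liftRel, Set.mem_iUnion]; exact ⟨x, hx, y, hy, hw⟩)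
  -- step 1: for each x ∈ X, all of comp x b satisfies N · z
  have step1 : ∀ x ∈ X, ∀ w ∈ comp x b, N w z := by
    intro x hx
    refine (hnuc x b z).2.mpr ?_
    intro u hu
    exact hb u (fun y hy => (hnuc x y z).2.mp (hz' x hx y hy) u hu)
  -- step 2: all of comp a b satisfies N · z
  exact (hnuc a b z).1.mpr
    (fun u hu => ha u (fun x hx => (hnuc x b z).1.mp (step1 x hx) u hu)) w hab
end

section
/- Let A be a GBI-algebra and let F, G be filters of A. Then the upward closure ↑(FG) of the set FG = {a·b | a ∈ F, b ∈ G} is a filter of A: it is nonempty, upward closed, and closed under binary meets. -/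
/-- A (lattice) filter: a nonempty, upward-closed subset closed under binary
meets. -/
def IsLatticeFilter {A : Type*} [Lattice A] (F : Set A) : Prop :=
  F.Nonempty ∧ (∀ x ∈ F, ∀ y : A, x ≤ y → y ∈ F) ∧ (∀ x ∈ F, ∀ y ∈ F, x ⊓ y ∈ F)

/-- In a GBI-algebra, the upward closure of the elementwise product `FG` of two
filters `F`, `G` is again a filter. -/
theorem upclosure_filter_product_isFilter {A : Type*} [HeytingAlgebra A] [Monoid A]
    (ldiv rdiv : A → A → A)
    (hld : ∀ x y z : A, x * y ≤ z ↔ y ≤ ldiv x z)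
    (hrd : ∀ x y z : A, x * y ≤ z ↔ x ≤ rdiv z y)
    (F G : Set A) (hF : IsLatticeFilter F) (hG : IsLatticeFilter G) :
    IsLatticeFilter {z : A | ∃ a ∈ F, ∃ b ∈ G, a * b ≤ z} := by
  obtain ⟨⟨a0, ha0⟩, hFup, hFmeet⟩ := hF
  obtain ⟨⟨b0, hb0⟩, hGup, hGmeet⟩ := hG
  -- multiplication is monotone
  have hmono : ∀ a a' b b' : A, a ≤ a' → b ≤ b' → a * b ≤ a' * b' := by
    intro a a' b b' ha hb
    have h1 : a' * b ≤ a' * b' := (hld a' b (a' * b')).2 (le_trans hb ((hld a' b' _).1 le_rfl))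
    have h2 : a * b ≤ a' * b := (hrd a b (a' * b)).2 (le_trans ha ((hrd a' b _).1 le_rfl))
    exact le_trans h2 h1
  refine ⟨⟨a0 * b0, a0, ha0, b0, hb0, le_rfl⟩, ?_, ?_⟩
  · rintro x ⟨a, haF, b, hbG, hab⟩ y hxy
    exact ⟨a, haF, b, hbG, le_trans hab hxy⟩
  · rintro x ⟨a1, ha1, b1, hb1, h1⟩ y ⟨a2, ha2, b2, hb2, h2⟩
    refine ⟨a1 ⊓ a2, hFmeet _ ha1 _ ha2, b1 ⊓ b2, hGmeet _ hb1 _ hb2, le_inf ?_ ?_⟩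
    · exact le_trans (hmono _ _ _ _ inf_le_left inf_le_left) h1
    · exact le_trans (hmono _ _ _ _ inf_le_right inf_le_right) h2
end

section
/- Let A be a GBI-algebra, let F and G be filters of A, and let H be a prime filter of A such that FG ⊆ H (i.e. a·b ∈ H for all a ∈ F, b ∈ G). Then there exist prime filters F' and G' of A with F ⊆ F', G ⊆ G', F'G ⊆ H, FG' ⊆ H and F'G' ⊆ H. -/
/-- A prime filter: a proper filter such that `x ⊔ y ∈ H` implies `x ∈ H` or
`y ∈ H`. -/
def IsPrimeLatticeFilter {A : Type*} [Lattice A] (H : Set A) : Prop :=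
  IsLatticeFilter H ∧ H ≠ Set.univ ∧ ∀ x y : A, x ⊔ y ∈ H → x ∈ H ∨ y ∈ H

/-- Key extension lemma: a filter `F` with `m F T ⊆ H` extends to a maximal
such filter, which is prime. -/
lemma aux_prime_extension {A : Type*} [HeytingAlgebra A] (m : A → A → A)
    (hmono : ∀ a a' b b' : A, a ≤ a' → b ≤ b' → m a b ≤ m a' b')
    (hjoin : ∀ u v b : A, m (u ⊔ v) b ≤ m u b ⊔ m v b)
    (hbot : ∀ b : A, m ⊥ b ≤ ⊥)
    (T H : Set A) (hT : IsLatticeFilter T) (hH : IsPrimeLatticeFilter H)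
    (F : Set A) (hF : IsLatticeFilter F)
    (hFT : ∀ a ∈ F, ∀ b ∈ T, m a b ∈ H) :
    ∃ F' : Set A, IsPrimeLatticeFilter F' ∧ F ⊆ F' ∧
      ∀ a ∈ F', ∀ b ∈ T, m a b ∈ H := by
  obtain ⟨hHfil, hHproper, hHprime⟩ := hH
  set S : Set (Set A) := {K | IsLatticeFilter K ∧ ∀ a ∈ K, ∀ b ∈ T, m a b ∈ H}
    with hS
  have hbotH : (⊥ : A) ∉ H := by
    intro hb
    apply hHproper
    ext x
    simp only [Set.mem_univ, iff_true]
    exact hHfil.2.1 ⊥ hb x bot_le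
  obtain ⟨M, hFM, hMS, hMmax⟩ := by
    refine zorn_subset_nonempty S ?_ F ⟨hF, hFT⟩
    intro c hcS hchain hcne
    refine ⟨⋃₀ c, ⟨⟨?_, ?_, ?_⟩, ?_⟩, fun s hs => Set.subset_sUnion_of_mem hs⟩
    · obtain ⟨K, hK⟩ := hcne
      obtain ⟨x, hx⟩ := (hcS hK).1.1
      exact ⟨x, K, hK, hx⟩
    · rintro x ⟨K, hK, hxK⟩ y hxy
      exact ⟨K, hK, (hcS hK).1.2.1 x hxK y hxy⟩
    · rintro x ⟨K, hK, hxK⟩ y ⟨L, hL, hyL⟩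
      rcases hchain.total hK hL with h | h
      · exact ⟨L, hL, (hcS hL).1.2.2 x (h hxK) y hyL⟩
      · exact ⟨K, hK, (hcS hK).1.2.2 x hxK y (h hyL)⟩
    · rintro a ⟨K, hK, haK⟩ b hb
      exact (hcS hK).2 a haK b hb
  obtain ⟨hMfil, hMH⟩ := hMS
  have hMmax' := hMmax
  refine ⟨M, ⟨hMfil, ?_, ?_⟩, hFM, hMH⟩
  · -- proper
    intro hMuniv
    obtain ⟨b, hb⟩ := hT.1
    have : m ⊥ b ∈ H := hMH ⊥ (hMuniv ▸ Set.mem_univ ⊥) b hb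
    exact hbotH (hHfil.2.1 _ this ⊥ (hbot b))
  · -- prime
    intro x y hxy
    by_contra hcon
    push_neg at hcon
    obtain ⟨hx, hy⟩ := hcon
    -- the filter generated by M and a given element
    have gen : ∀ w : A, w ∉ M → ∃ z, (∃ f ∈ M, f ⊓ w ≤ z) ∧
        ∃ b ∈ T, m z b ∉ H := by
      intro w hw
      set K : Set A := {z | ∃ f ∈ M, f ⊓ w ≤ z} with hK
      have hMK : M ⊆ K := fun f hf => ⟨f, hf, inf_le_left⟩
      have hwK : w ∈ K := by
        obtain ⟨f, hf⟩ := hMfil.1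
        exact ⟨f, hf, inf_le_right⟩
      have hKfil : IsLatticeFilter K := by
        refine ⟨⟨w, hwK⟩, ?_, ?_⟩
        · rintro z ⟨f, hf, hfz⟩ z' hzz'
          exact ⟨f, hf, hfz.trans hzz'⟩
        · rintro z ⟨f, hf, hfz⟩ z' ⟨f', hf', hfz'⟩
          refine ⟨f ⊓ f', hMfil.2.2 f hf f' hf', ?_⟩
          refine le_inf ?_ ?_
          · exact le_trans (by gcongr; exact inf_le_left) hfz
          · exact le_trans (by gcongr; exact inf_le_right) hfz'
      have hKne : K ∉ S := by
        intro hKS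
        exact hw (hMmax' hKS hMK hwK)
      simp only [hS, Set.mem_setOf_eq, hKfil, true_and, not_forall] at hKne
      obtain ⟨z, hz, b, hb, hnH⟩ := hKne
      exact ⟨z, hz, b, hb, hnH⟩
    obtain ⟨z₁, ⟨f₁, hf₁, hfz₁⟩, b₁, hb₁, hnH₁⟩ := gen x hx
    obtain ⟨z₂, ⟨f₂, hf₂, hfz₂⟩, b₂, hb₂, hnH₂⟩ := gen y hy
    have hc : f₁ ⊓ f₂ ⊓ (x ⊔ y) ∈ M :=
      hMfil.2.2 _ (hMfil.2.2 f₁ hf₁ f₂ hf₂) _ hxy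
    have hbT : b₁ ⊓ b₂ ∈ T := hT.2.2 b₁ hb₁ b₂ hb₂
    have hmem : m (f₁ ⊓ f₂ ⊓ (x ⊔ y)) (b₁ ⊓ b₂) ∈ H := hMH _ hc _ hbT
    have hdist : f₁ ⊓ f₂ ⊓ (x ⊔ y) = (f₁ ⊓ f₂ ⊓ x) ⊔ (f₁ ⊓ f₂ ⊓ y) :=
      inf_sup_left _ _ _
    rw [hdist] at hmem
    have hle : m ((f₁ ⊓ f₂ ⊓ x) ⊔ (f₁ ⊓ f₂ ⊓ y)) (b₁ ⊓ b₂) ≤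
        m (f₁ ⊓ f₂ ⊓ x) (b₁ ⊓ b₂) ⊔ m (f₁ ⊓ f₂ ⊓ y) (b₁ ⊓ b₂) :=
      hjoin _ _ _
    have hsplit := hHprime _ _ (hHfil.2.1 _ hmem _ hle)
    rcases hsplit with h | h
    · apply hnH₁
      refine hHfil.2.1 _ h _ ?_
      refine hmono _ _ _ _ ?_ inf_le_left
      exact le_trans (by gcongr; exact inf_le_left) hfz₁
    · apply hnH₂
      refine hHfil.2.1 _ h _ ?_
      refine hmono _ _ _ _ ?_ inf_le_right
      exact le_trans (by gcongr; exact inf_le_right) hfz₂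

/-- In a GBI-algebra, if `F, G` are filters and `H` a prime filter with
`FG ⊆ H`, then `F` and `G` can be extended to prime filters `F'`, `G'` with
`F'G ⊆ H`, `FG' ⊆ H` and `F'G' ⊆ H`. -/
theorem prime_filter_product_extension {A : Type*} [HeytingAlgebra A] [Monoid A]
    (ldiv rdiv : A → A → A)
    (hld : ∀ x y z : A, x * y ≤ z ↔ y ≤ ldiv x z)
    (hrd : ∀ x y z : A, x * y ≤ z ↔ x ≤ rdiv z y)
    (F G H : Set A) (hF : IsLatticeFilter F) (hG : IsLatticeFilter G)
    (hH : IsPrimeLatticeFilter H)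
    (hFG : ∀ a ∈ F, ∀ b ∈ G, a * b ∈ H) :
    ∃ F' G' : Set A, IsPrimeLatticeFilter F' ∧ IsPrimeLatticeFilter G' ∧
      F ⊆ F' ∧ G ⊆ G' ∧
      (∀ a ∈ F', ∀ b ∈ G, a * b ∈ H) ∧
      (∀ a ∈ F, ∀ b ∈ G', a * b ∈ H) ∧
      (∀ a ∈ F', ∀ b ∈ G', a * b ∈ H) := by
  have hmono : ∀ a a' b b' : A, a ≤ a' → b ≤ b' → a * b ≤ a' * b' := by
    intro a a' b b' ha hb
    have h1 : a' * b ≤ a' * b' :=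
      (hld a' b (a' * b')).mpr (hb.trans ((hld a' b' (a' * b')).mp le_rfl))
    have h2 : a * b ≤ a' * b :=
      (hrd a b (a' * b)).mpr (ha.trans ((hrd a' b (a' * b)).mp le_rfl))
    exact h2.trans h1
  have hjoinL : ∀ u v b : A, (u ⊔ v) * b ≤ u * b ⊔ v * b := by
    intro u v b
    refine (hrd _ _ _).mpr (sup_le ?_ ?_)
    · exact (hrd u b _).mp le_sup_left
    · exact (hrd v b _).mp le_sup_right
  have hjoinR : ∀ u v a : A, a * (u ⊔ v) ≤ a * u ⊔ a * v := by
    intro u v a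
    refine (hld _ _ _).mpr (sup_le ?_ ?_)
    · exact (hld a u _).mp le_sup_left
    · exact (hld a v _).mp le_sup_right
  obtain ⟨F', hF'prime, hFF', hF'G⟩ :=
    aux_prime_extension (fun a b => a * b) hmono hjoinL
      (fun b => (hrd ⊥ b ⊥).mpr bot_le) G H hG hH F hF hFG
  obtain ⟨G', hG'prime, hGG', hG'F'⟩ :=
    aux_prime_extension (fun b a => a * b)
      (fun a a' b b' ha hb => hmono b b' a a' hb ha)
      (fun u v a => hjoinR u v a)
      (fun a => (hld a ⊥ ⊥).mpr bot_le)
      F' H hF'prime.1 hH G hG (fun b hb a ha => hF'G a ha b hb)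
  exact ⟨F', G', hF'prime, hG'prime, hFF', hGG', hF'G,
    fun a ha b hb => hG'F' b hb a (hFF' ha),
    fun a ha b hb => hG'F' b hb a ha⟩
end

section
/- Let A be a GBI-algebra, a, b ∈ A, and let H be a prime filter of A. Then a·b ∈ H if and only if there exist prime filters F and G of A with a ∈ F, b ∈ G and FG ⊆ H. (In the notation of the duality for GBI-algebras: 𝓕_a ∘ 𝓕_b = 𝓕_{a·b}.) -/
/-- Key Zorn lemma: for a predicate `P` which is upward closed, prime, and
fails at `⊥`, if `P a` then there is a prime filter containing `a` on which
`P` holds everywhere. -/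
theorem exists_prime_filter_forall {A : Type*} [DistribLattice A] [OrderBot A]
    (P : A → Prop) (hup : ∀ x y : A, x ≤ y → P x → P y)
    (hpr : ∀ x y : A, P (x ⊔ y) → P x ∨ P y) (hbot : ¬ P ⊥)
    (a : A) (ha : P a) :
    ∃ F : Set A, IsPrimeLatticeFilter F ∧ a ∈ F ∧ ∀ x ∈ F, P x := by
  set S : Set (Set A) := {F | IsLatticeFilter F ∧ a ∈ F ∧ ∀ x ∈ F, P x} with hS
  have hchain : ∀ c ⊆ S, IsChain (· ⊆ ·) c → c.Nonempty →
      ∃ ub ∈ S, ∀ s ∈ c, s ⊆ ub := by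
    intro c hcS hc ⟨F0, hF0⟩
    refine ⟨⋃₀ c, ⟨⟨⟨a, ?_⟩, ?_, ?_⟩, ?_, ?_⟩, fun s hs => Set.subset_sUnion_of_mem hs⟩
    · exact ⟨F0, hF0, (hcS hF0).2.1⟩
    · rintro x ⟨F, hF, hx⟩ y hxy
      exact ⟨F, hF, (hcS hF).1.2.1 x hx y hxy⟩
    · rintro x ⟨F, hF, hx⟩ y ⟨G, hG, hy⟩
      rcases hc.total hF hG with h | h
      · exact ⟨G, hG, (hcS hG).1.2.2 x (h hx) y hy⟩
      · exact ⟨F, hF, (hcS hF).1.2.2 x hx y (h hy)⟩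
    · exact ⟨F0, hF0, (hcS hF0).2.1⟩
    · rintro x ⟨F, hF, hx⟩
      exact (hcS hF).2.2 x hx
  have haS : {x : A | a ≤ x} ∈ S := by
    refine ⟨⟨⟨a, le_refl a⟩, fun x hx y hxy => le_trans hx hxy,
      fun x hx y hy => le_inf hx hy⟩, le_refl a, fun x hx => hup a x hx ha⟩
  obtain ⟨M, _, hMS, hMmax⟩ := zorn_subset_nonempty S hchain _ haS
  obtain ⟨hMfil, haM, hMP⟩ := hMS
  refine ⟨M, ⟨hMfil, ?_, ?_⟩, haM, hMP⟩
  · intro h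
    exact hbot (hMP ⊥ (h ▸ Set.mem_univ ⊥))
  · intro x y hxy
    by_contra hcon
    push_neg at hcon
    obtain ⟨hx, hy⟩ := hcon
    -- the filter generated by M ∪ {x}
    have hext : ∀ z : A, z ∉ M → ∃ f ∈ M, ¬ P (f ⊓ z) := by
      intro z hz
      by_contra hc
      push_neg at hc
      have : {w : A | ∃ f ∈ M, f ⊓ z ≤ w} ∈ S := by
        refine ⟨⟨⟨z, ⟨x ⊔ y, hxy, inf_le_right⟩⟩, ?_, ?_⟩, ?_, ?_⟩
        · rintro u ⟨f, hf, hfu⟩ v huv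
          exact ⟨f, hf, le_trans hfu huv⟩
        · rintro u ⟨f, hf, hfu⟩ v ⟨g, hg, hgv⟩
          exact ⟨f ⊓ g, hMfil.2.2 f hf g hg,
            le_inf (le_trans (inf_le_inf_right z inf_le_left) hfu)
              (le_trans (inf_le_inf_right z inf_le_right) hgv)⟩
        · exact ⟨a, haM, le_trans inf_le_left (le_refl a)⟩
        · rintro w ⟨f, hf, hfw⟩
          exact hup _ _ hfw (hc f hf)
      have hsub : M ⊆ {w : A | ∃ f ∈ M, f ⊓ z ≤ w} :=
        fun w hw => ⟨w, hw, inf_le_left⟩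
      have := hMmax this hsub
      exact hz (this ⟨x ⊔ y, hxy, inf_le_right⟩)
    obtain ⟨f, hf, hfx⟩ := hext x hx
    obtain ⟨g, hg, hgy⟩ := hext y hy
    have hfg : f ⊓ g ∈ M := hMfil.2.2 f hf g hg
    have hP : P ((f ⊓ g) ⊓ (x ⊔ y)) := hMP _ (hMfil.2.2 _ hfg _ hxy)
    rw [inf_sup_left] at hP
    rcases hpr _ _ hP with h | h
    · exact hfx (hup _ _ (inf_le_inf_right x inf_le_left) h)
    · exact hgy (hup _ _ (inf_le_inf_right y inf_le_right) h)

/-- In a GBI-algebra, for a prime filter `H`: `a·b ∈ H` iff there are prime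
filters `F ∋ a`, `G ∋ b` with `FG ⊆ H`.  (In duality notation,
`𝓕_a ∘ 𝓕_b = 𝓕_{a·b}`.) -/
theorem prime_filter_mul_mem_iff {A : Type*} [HeytingAlgebra A] [Monoid A]
    (ldiv rdiv : A → A → A)
    (hld : ∀ x y z : A, x * y ≤ z ↔ y ≤ ldiv x z)
    (hrd : ∀ x y z : A, x * y ≤ z ↔ x ≤ rdiv z y)
    (a b : A) (H : Set A) (hH : IsPrimeLatticeFilter H) :
    a * b ∈ H ↔
      ∃ F G : Set A, IsPrimeLatticeFilter F ∧ IsPrimeLatticeFilter G ∧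
        a ∈ F ∧ b ∈ G ∧ ∀ x ∈ F, ∀ y ∈ G, x * y ∈ H := by
  have mono : ∀ x x' y y' : A, x ≤ x' → y ≤ y' → x * y ≤ x' * y' := by
    intro x x' y y' hx hy
    have h1 : x * y ≤ x * y' :=
      (hld x y (x * y')).mpr (le_trans hy ((hld x y' (x * y')).mp le_rfl))
    have h2 : x * y' ≤ x' * y' :=
      (hrd x y' (x' * y')).mpr (le_trans hx ((hrd x' y' (x' * y')).mp le_rfl))
    exact le_trans h1 h2
  have msup_l : ∀ p q y : A, (p ⊔ q) * y = p * y ⊔ q * y := by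
    intro p q y
    refine le_antisymm ?_ (sup_le (mono _ _ _ _ le_sup_left le_rfl)
      (mono _ _ _ _ le_sup_right le_rfl))
    refine (hrd _ _ _).mpr (sup_le ?_ ?_)
    · exact (hrd _ _ _).mp (le_trans le_sup_left le_rfl)
    · exact (hrd _ _ _).mp (le_trans le_sup_right le_rfl)
  have msup_r : ∀ x p q : A, x * (p ⊔ q) = x * p ⊔ x * q := by
    intro x p q
    refine le_antisymm ?_ (sup_le (mono _ _ _ _ le_rfl le_sup_left)
      (mono _ _ _ _ le_rfl le_sup_right))
    refine (hld _ _ _).mpr (sup_le ?_ ?_)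
    · exact (hld _ _ _).mp (le_trans le_sup_left le_rfl)
    · exact (hld _ _ _).mp (le_trans le_sup_right le_rfl)
  have hbotH : (⊥ : A) ∉ H := by
    intro hb
    exact hH.2.1 (Set.eq_univ_of_forall fun z => hH.1.2.1 ⊥ hb z bot_le)
  have bot_mul : ∀ y : A, (⊥ : A) * y = ⊥ :=
    fun y => le_antisymm ((hrd _ _ _).mpr bot_le) bot_le
  have mul_bot : ∀ x : A, x * (⊥ : A) = ⊥ :=
    fun x => le_antisymm ((hld _ _ _).mpr bot_le) bot_le
  constructor
  · intro hab
    -- first build F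
    obtain ⟨F, hF, haF, hFP⟩ := exists_prime_filter_forall
      (fun x => x * b ∈ H)
      (fun x y hxy hx => hH.1.2.1 _ hx _ (mono _ _ _ _ hxy le_rfl))
      (fun x y hxy => hH.2.2 _ _ (by
        have h' : (x ⊔ y) * b ∈ H := hxy
        rwa [msup_l] at h'))
      (by
        intro h
        have h' : (⊥ : A) * b ∈ H := h
        rw [bot_mul] at h'
        exact hbotH h') a hab
    -- then build G
    obtain ⟨G, hG, hbG, hGP⟩ := exists_prime_filter_forall
      (fun y => ∀ x ∈ F, x * y ∈ H)
      (fun y y' hyy' hy x hx => hH.1.2.1 _ (hy x hx) _ (mono _ _ _ _ le_rfl hyy'))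
      (fun y y' hyy' => by
        show (∀ x ∈ F, x * y ∈ H) ∨ (∀ x ∈ F, x * y' ∈ H)
        by_contra hc
        push_neg at hc
        obtain ⟨⟨f, hf, hfH⟩, ⟨g, hg, hgH⟩⟩ := hc
        have hfg : f ⊓ g ∈ F := hF.1.2.2 f hf g hg
        have hyy'' : ∀ x ∈ F, x * (y ⊔ y') ∈ H := hyy'
        have := hyy'' (f ⊓ g) hfg
        rw [msup_r] at this
        rcases hH.2.2 _ _ this with h | h
        · exact hfH (hH.1.2.1 _ h _ (mono _ _ _ _ inf_le_left le_rfl))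
        · exact hgH (hH.1.2.1 _ h _ (mono _ _ _ _ inf_le_right le_rfl)))
      (by
        intro hc
        have h' : ∀ x ∈ F, x * (⊥ : A) ∈ H := hc
        have := h' a haF
        rw [mul_bot] at this
        exact hbotH this)
      b (fun x hx => hFP x hx)
    exact ⟨F, G, hF, hG, haF, hbG, fun x hx y hy => hGP y hy x hx⟩
  · rintro ⟨F, G, hF, hG, haF, hbG, hFG⟩
    exact hFG a haF b hbG
end

section
/- Let M be a generalized PPM with preorder ⊑, partial operation op and unit set E. For X, Y ⊆ M define X · Y = {z | ∃ x ∈ X, ∃ y ∈ Y, ∃ w, op x y = some w ∧ w ⊑ z}, and let ↑E = {z | ∃ e ∈ E, e ⊑ z}. Then: (a) X · Y is ⊑-upward closed for all X, Y ⊆ M; (b) the lifted operation is associative: (X · Y) · Z = X · (Y · Z) for all X, Y, Z ⊆ M; (c) ↑E is a two-sided unit on upward-closed sets: if X is ⊑-upward closed then ↑E · X = X = X · ↑E; (d) the lifted operation distributes over arbitrary unions in each argument: X · (⋃ i, Y i) = ⋃ i, (X · Y i) and (⋃ i, X i) · Y = ⋃ i, (X i · Y). (Hence the complex algebra of upward-closed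 subsets of a generalized PPM is a GBI-algebra.) -/
/-- A generalized PPM: a preordered partial monoid, with the partial binary
operation encoded via `Option`, a set `E` of units, associativity and unit laws
holding up to the equivalence `x ≡ y := le x y ∧ le y x`, and bifunctoriality
of the operation with respect to the preorder. -/
structure IsGenPPM {M : Type*} (le : M → M → Prop) (op : M → M → Option M)
    (E : Set M) : Prop where
  refl : ∀ x, le x x
  trans : ∀ {x y z}, le x y → le y z → le x z
  assoc_right : ∀ {x y z xy w}, op x y = some xy → op xy z = some w →
    ∃ yz w', op y z = some yz ∧ op x yz = some w' ∧ le w w' ∧ le w' w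
  assoc_left : ∀ {x y z yz w}, op y z = some yz → op x yz = some w →
    ∃ xy w', op x y = some xy ∧ op xy z = some w' ∧ le w w' ∧ le w' w
  unitSet_closed : ∀ {e x}, e ∈ E → le e x → le x e → x ∈ E
  unit_right_ex : ∀ x, ∃ e ∈ E, ∃ w, op x e = some w
  unit_right : ∀ {x e w}, e ∈ E → op x e = some w → le w x ∧ le x w
  unit_left_ex : ∀ x, ∃ e ∈ E, ∃ w, op e x = some w
  unit_left : ∀ {x e w}, e ∈ E → op e x = some w → le w x ∧ le x w
  bifunc : ∀ {x x' y y' w'}, le x x' → le y y' → op x' y' = some w' →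
    ∃ w, op x y = some w ∧ le w w'

/-- The lifting of the partial operation of a generalized PPM to subsets:
`X · Y = {z | ∃ x ∈ X, y ∈ Y, x·y is defined and x·y ⊑ z}`. -/
def ppmMul {M : Type*} (le : M → M → Prop) (op : M → M → Option M)
    (X Y : Set M) : Set M :=
  {z | ∃ x ∈ X, ∃ y ∈ Y, ∃ w, op x y = some w ∧ le w z}

/-- In a generalized PPM: the lifted product of two sets is upward closed; the
lifted product is associative; the upward closure of `E` is a two-sided unit on
upward closed sets; and the lifted product distributes over arbitrary unions in
each argument.  (Hence the complex algebra of a generalized PPM is a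
GBI-algebra.) -/
theorem genPPM_complex_algebra {M : Type*} (le : M → M → Prop)
    (op : M → M → Option M) (E : Set M) (h : IsGenPPM le op E) :
    (∀ X Y : Set M, ∀ z ∈ ppmMul le op X Y, ∀ z', le z z' → z' ∈ ppmMul le op X Y) ∧
    (∀ X Y Z : Set M,
      ppmMul le op (ppmMul le op X Y) Z = ppmMul le op X (ppmMul le op Y Z)) ∧
    (∀ X : Set M, (∀ x ∈ X, ∀ z, le x z → z ∈ X) →
      ppmMul le op {z | ∃ e ∈ E, le e z} X = X ∧
      ppmMul le op X {z | ∃ e ∈ E, le e z} = X) ∧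
    (∀ (ι : Type*) (X : Set M) (Y : ι → Set M),
      ppmMul le op X (⋃ i, Y i) = ⋃ i, ppmMul le op X (Y i)) ∧
    (∀ (ι : Type*) (X : ι → Set M) (Y : Set M),
      ppmMul le op (⋃ i, X i) Y = ⋃ i, ppmMul le op (X i) Y) := by
  refine ⟨?_, ?_, ?_, ?_, ?_⟩
  · rintro X Y z ⟨x, hx, y, hy, w, hw, hwz⟩ z' hzz'
    exact ⟨x, hx, y, hy, w, hw, h.trans hwz hzz'⟩
  · intro X Y Z
    ext z
    constructor
    · rintro ⟨p, ⟨a, ha, b, hb, ab, hab, habp⟩, c, hc, w, hw, hwz⟩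
      obtain ⟨w', hw', hw'w⟩ := h.bifunc habp (h.refl c) hw
      obtain ⟨bc, w'', hbc, hw'', _, hle⟩ := h.assoc_right hab hw'
      exact ⟨a, ha, bc, ⟨b, hb, c, hc, bc, hbc, h.refl bc⟩, w'',
        hw'', h.trans hle (h.trans hw'w hwz)⟩
    · rintro ⟨a, ha, q, ⟨b, hb, c, hc, bc, hbc, hbcq⟩, w, hw, hwz⟩
      obtain ⟨w', hw', hw'w⟩ := h.bifunc (h.refl a) hbcq hw
      obtain ⟨ab, w'', hab, hw'', _, hle⟩ := h.assoc_left hbc hw'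
      exact ⟨ab, ⟨a, ha, b, hb, ab, hab, h.refl ab⟩, c, hc, w'',
        hw'', h.trans hle (h.trans hw'w hwz)⟩
  · intro X hX
    constructor
    · ext z
      constructor
      · rintro ⟨e', ⟨e, he, hee'⟩, x, hx, w, hw, hwz⟩
        obtain ⟨w0, hw0, hw0w⟩ := h.bifunc hee' (h.refl x) hw
        exact hX x hx z (h.trans (h.unit_left he hw0).2 (h.trans hw0w hwz))
      · intro hz
        obtain ⟨e, he, w, hw⟩ := h.unit_left_ex z
        exact ⟨e, ⟨e, he, h.refl e⟩, z, hz, w, hw, (h.unit_left he hw).1⟩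
    · ext z
      constructor
      · rintro ⟨x, hx, e', ⟨e, he, hee'⟩, w, hw, hwz⟩
        obtain ⟨w0, hw0, hw0w⟩ := h.bifunc (h.refl x) hee' hw
        exact hX x hx z (h.trans (h.unit_right he hw0).2 (h.trans hw0w hwz))
      · intro hz
        obtain ⟨e, he, w, hw⟩ := h.unit_right_ex z
        exact ⟨z, hz, e, ⟨e, he, h.refl e⟩, w, hw, (h.unit_right he hw).1⟩
  · intro ι X Y
    ext z
    simp only [Set.mem_iUnion, ppmMul, Set.mem_setOf_eq]
    constructor
    · rintro ⟨x, hx, y, ⟨i, hy⟩, w, hw⟩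
      exact ⟨i, x, hx, y, hy, w, hw⟩
    · rintro ⟨i, x, hx, y, hy, w, hw⟩
      exact ⟨x, hx, y, ⟨i, hy⟩, w, hw⟩
  · intro ι X Y
    ext z
    simp only [Set.mem_iUnion, ppmMul, Set.mem_setOf_eq]
    constructor
    · rintro ⟨x, ⟨i, hx⟩, y, hy, w, hw⟩
      exact ⟨i, x, hx, y, hy, w, hw⟩
    · rintro ⟨i, x, hx, y, hy, w, hw⟩
      exact ⟨x, ⟨i, hx⟩, y, hy, w, hw⟩
end

section
/- Let M be a PME that is right-cancellative (if x·y and x·y' are both defined and x·y ≡ x·y', then y ≡ y') and satisfies indivisibility of units (if x·y is defined and x·y ∈ E, then x ∈ E). Then the equivalence associated to the substate relation coincides with the original equivalence: if x ⪯ y and y ⪯ x then x ≡ y. -/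
/-- A partial monoid up to equivalence (PME): a partial binary operation
(encoded via `Option`), a set `E` of units, and an equivalence relation `eqv`,
with associativity and unit laws holding up to `eqv`, and the operation
bifunctorial with respect to `eqv`. -/
structure IsPME {M : Type*} (op : M → M → Option M) (E : Set M)
    (eqv : M → M → Prop) : Prop where
  refl : ∀ x, eqv x x
  symm : ∀ {x y}, eqv x y → eqv y x
  trans : ∀ {x y z}, eqv x y → eqv y z → eqv x z
  assoc_right : ∀ {x y z xy w}, op x y = some xy → op xy z = some w →
    ∃ yz w', op y z = some yz ∧ op x yz = some w' ∧ eqv w w'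
  assoc_left : ∀ {x y z yz w}, op y z = some yz → op x yz = some w →
    ∃ xy w', op x y = some xy ∧ op xy z = some w' ∧ eqv w w'
  unitSet_closed : ∀ {e x}, e ∈ E → eqv e x → x ∈ E
  unit_right_ex : ∀ x, ∃ e ∈ E, ∃ w, op x e = some w
  unit_right : ∀ {x e w}, e ∈ E → op x e = some w → eqv w x
  unit_left_ex : ∀ x, ∃ e ∈ E, ∃ w, op e x = some w
  unit_left : ∀ {x e w}, e ∈ E → op e x = some w → eqv w x
  bifunc : ∀ {x x' y y' w'}, eqv x x' → eqv y y' → op x' y' = some w' →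
    ∃ w, op x y = some w ∧ eqv w w'

/-- The centre `C_M` of a PME: the elements that commute (up to `eqv`) with
every element with which they compose. -/
def pmeCentre {M : Type*} (op : M → M → Option M) (eqv : M → M → Prop) : Set M :=
  {x | (∀ y w, op x y = some w → ∃ y' w', op y' x = some w' ∧ eqv w w') ∧
       (∀ y w, op y x = some w → ∃ y' w', op x y' = some w' ∧ eqv w w')}

/-- The substate relation: `x ⪯ y` iff `x·z ≡ y` for some central `z`. -/
def pmeSubstate {M : Type*} (op : M → M → Option M) (eqv : M → M → Prop)
    (x y : M) : Prop :=
  ∃ z ∈ pmeCentre op eqv, ∃ w, op x z = some w ∧ eqv w y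

/-- In a right-cancellative PME with indivisibility of units, the equivalence
associated to the substate relation coincides with the original
equivalence. -/
theorem pmeSubstate_antisymm_of_cancellative {M : Type*} (op : M → M → Option M)
    (E : Set M) (eqv : M → M → Prop) (h : IsPME op E eqv)
    (hcancel : ∀ x y y' w w' : M, op x y = some w → op x y' = some w' →
      eqv w w' → eqv y y')
    (hindiv : ∀ x y w : M, op x y = some w → w ∈ E → x ∈ E) :
    ∀ x y : M, pmeSubstate op eqv x y → pmeSubstate op eqv y x → eqv x y := by
  rintro x y ⟨z, -, w, hxz, hwy⟩ ⟨z', -, w', hyz', hw'x⟩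
  -- op w z' is defined with result ≡ w' ≡ x, since w ≡ y
  obtain ⟨w'', hwz', hw''⟩ := h.bifunc hwy (h.refl z') hyz'
  have hw''x : eqv w'' x := h.trans hw'' hw'x
  -- associativity: op z z' = some zz', op x zz' = some v, eqv w'' v
  obtain ⟨zz', v, hzz', hxzz', hv⟩ := h.assoc_right hxz hwz'
  have hvx : eqv v x := h.trans (h.symm hv) hw''x
  -- right unit for x
  obtain ⟨e, heE, u, hxe⟩ := h.unit_right_ex x
  have hux : eqv u x := h.unit_right heE hxe
  -- cancel: zz' ≡ e
  have hzz'e : eqv zz' e := hcancel x zz' e v u hxzz' hxe (h.trans hvx (h.symm hux))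
  have hzz'E : zz' ∈ E := h.unitSet_closed heE (h.symm hzz'e)
  have hzE : z ∈ E := hindiv z z' zz' hzz' hzz'E
  exact h.trans (h.symm (h.unit_right hzE hxz)) hwy
end

section
/- Let M be a PME, and let A, B ⊆ M be upward closed under the substate relation ⪯. Suppose B satisfies: for all b ∈ B and c ∈ C_M, if b·c is defined then b·c ∈ C_M. Then A · B ⊆ A, where A · B = {z | ∃ a ∈ A, ∃ b ∈ B, a·b is defined and a·b ⪯ z}. (In particular, in the intuitionistic complex algebra of a commutative PME the weakening law x·y ≤ x holds for such B.) -/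
/-- Weakening in the intuitionistic complex algebra of a PME: if `A`, `B` are
upward closed under the substate relation and every defined product of an
element of `B` with a central element is central, then `A · B ⊆ A`. -/
theorem pme_weakening {M : Type*} (op : M → M → Option M) (E : Set M)
    (eqv : M → M → Prop) (h : IsPME op E eqv)
    (A B : Set M)
    (hA : ∀ a ∈ A, ∀ z, pmeSubstate op eqv a z → z ∈ A)
    (hB : ∀ b ∈ B, ∀ z, pmeSubstate op eqv b z → z ∈ B)
    (hBC : ∀ b ∈ B, ∀ c ∈ pmeCentre op eqv, ∀ w, op b c = some w →
      w ∈ pmeCentre op eqv) :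
    {z | ∃ a ∈ A, ∃ b ∈ B, ∃ w, op a b = some w ∧ pmeSubstate op eqv w z} ⊆ A := by
  rintro z ⟨a, ha, b, hb, w, hab, c, hc, v, hwc, hvz⟩
  obtain ⟨bc, w', hbc, habc, hvw'⟩ := h.assoc_right hab hwc
  exact hA a ha z ⟨bc, hBC b hb c hc bc hbc, w', habc, h.trans (h.symm hvw') hvz⟩
end
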